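/- Let q = max(m, k₁) and let λ ∈ ℂ with λ ∉ a(𝕋). If p(λ) > q, then λ is an eigenvalue of A = T(a) + E: there exists a nonzero v ∈ ℓ² with Av = λv. (In particular, every point of a connected component of ℂ ∖ a(𝕋) on which p > q is an eigenvalue of A.) -/

import Mathlib

open scoped ENNReal

noncomputable section

/-- The polynomial `b_λ(z) = z^m (a(z) - λ) = ∑_{k=0}^{m+n} a_{k-m} z^k - λ z^m`. -/
def bpoly (m n : ℕ) (a : ℤ → ℂ) (lam : ℂ) : Polynomial ℂ :=
  (∑ k ∈ Finset.range (m + n + 1), Polynomial.C (a ((k : ℤ) - (m : ℤ))) * Polynomial.X ^ k)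
    - Polynomial.C lam * Polynomial.X ^ m

/-- `p(λ)`: the number of roots of `b_λ` in the open unit disk, counted with multiplicity. -/
def rootCount (m n : ℕ) (a : ℤ → ℂ) (lam : ℂ) : ℕ :=
  Multiset.card ((bpoly m n a lam).roots.filter fun z => ‖z‖ < 1)

/-- The value `a(z) = ∑_{k=-m}^{n} a_k z^k` of the Laurent polynomial. -/
def aval (m n : ℕ) (a : ℤ → ℂ) (z : ℂ) : ℂ :=
  ∑ k ∈ Finset.Icc (-(m : ℤ)) (n : ℤ), a k * z ^ k

/-- The image `a(𝕋)` of the unit circle under the Laurent polynomial `a`. -/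
def aCircle (m n : ℕ) (a : ℤ → ℂ) : Set ℂ :=
  {w : ℂ | ∃ z : ℂ, ‖z‖ = 1 ∧ aval m n a z = w}

/-- The Hilbert space `ℓ²` of square-summable complex sequences (0-indexed). -/
abbrev ell2 := lp (fun _ : ℕ => ℂ) 2

section Helpers
open Polynomial

lemma xd_coeff (t : ℕ) (P : ℂ[X]) (j : ℕ) :
    ((fun Q : ℂ[X] => X * derivative Q)^[t] P).coeff j = (j : ℂ) ^ t * P.coeff j := by
  induction t generalizing P with
  | zero => simp
  | succ t ih =>
    rw [Function.iterate_succ_apply']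
    cases j with
    | zero => simp [coeff_zero, mul_coeff_zero]
    | succ jj =>
      rw [coeff_X_mul, coeff_derivative, ih]
      push_cast
      ring

lemma xd_natDegree_le (t : ℕ) (P : ℂ[X]) :
    ((fun Q : ℂ[X] => X * derivative Q)^[t] P).natDegree ≤ P.natDegree := by
  rw [natDegree_le_iff_coeff_eq_zero]
  intro j hj
  rw [xd_coeff, coeff_eq_zero_of_natDegree_lt hj, mul_zero]

lemma xd_eval_zero (t : ℕ) (z : ℂ) (P : ℂ[X]) (h : (X - C z) ^ (t + 1) ∣ P) :
    ((fun Q : ℂ[X] => X * derivative Q)^[t] P).eval z = 0 := by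
  induction t generalizing P with
  | zero =>
    simpa [Function.iterate_zero, IsRoot] using (dvd_iff_isRoot.mp (by simpa using h))
  | succ t ih =>
    rw [Function.iterate_succ_apply]
    apply ih
    refine Dvd.dvd.mul_left ?_ X
    have := pow_sub_one_dvd_derivative_of_pow_dvd (q := X - Polynomial.C z) (p := P) (n := t + 2) (by simpa using h)
    simpa using this

lemma bpoly_repr (m n : ℕ) (a : ℤ → ℂ)
    (hsupp : ∀ k : ℤ, (k < -(m : ℤ) ∨ (n : ℤ) < k) → a k = 0)
    (lam : ℂ) (i : ℕ) (him : m ≤ i) :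
    X ^ (i - m) * bpoly m n a lam =
      (∑ j ∈ Finset.range (i + n + 1), C (a ((j : ℤ) - (i : ℤ))) * X ^ j) - C lam * X ^ i := by
  have key : ∑ j ∈ Finset.range (i + n + 1), C (a ((j : ℤ) - (i : ℤ))) * X ^ j
      = ∑ k ∈ Finset.range (m + n + 1), C (a ((k : ℤ) - (m : ℤ))) * X ^ ((i - m) + k) := by
    have h1 : ∑ k ∈ Finset.range (m + n + 1), C (a ((k : ℤ) - (m : ℤ))) * X ^ ((i - m) + k)
        = ∑ j ∈ Finset.Ico (i - m) (i + n + 1), C (a ((j : ℤ) - (i : ℤ))) * X ^ j := by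
      rw [Finset.sum_Ico_eq_sum_range]
      have h2 : i + n + 1 - (i - m) = m + n + 1 := by omega
      rw [h2]
      refine Finset.sum_congr rfl fun k _ => ?_
      congr 2
      have h3 : ((i - m + k : ℕ) : ℤ) = (i : ℤ) - m + k := by
        push_cast [Nat.cast_sub him]; ring
      rw [h3]; ring_nf
    rw [h1]
    refine (Finset.sum_subset ?_ ?_).symm
    · intro j hj
      simp only [Finset.mem_Ico, Finset.mem_range] at hj ⊢
      omega
    · intro j hj1 hj2
      simp only [Finset.mem_Ico, Finset.mem_range] at hj1 hj2
      have hj : j < i - m := by omega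
      have hz : a ((j : ℤ) - i) = 0 := by
        refine hsupp _ (Or.inl ?_)
        omega
      rw [hz, map_zero, zero_mul]
  rw [key, bpoly, mul_sub, Finset.mul_sum]
  congr 1
  · refine Finset.sum_congr rfl fun k _ => ?_
    rw [pow_add]; ring
  · conv_rhs => rw [show i = i - m + m from by omega]
    rw [pow_add]; ring

lemma claim1 (m n : ℕ) (a : ℤ → ℂ)
    (hsupp : ∀ k : ℤ, (k < -(m : ℤ) ∨ (n : ℤ) < k) → a k = 0)
    (lam z : ℂ) (t i : ℕ)
    (hdvd : (X - C z) ^ (t + 1) ∣ bpoly m n a lam) (him : m ≤ i) :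
    ∑ j ∈ Finset.range (i + n + 1), a ((j : ℤ) - (i : ℤ)) * ((j : ℂ) ^ t * z ^ j)
      = lam * ((i : ℂ) ^ t * z ^ i) := by
  set Qi : ℂ[X] := X ^ (i - m) * bpoly m n a lam with hQi
  have hrepr := bpoly_repr m n a hsupp lam i him
  have hdeg : Qi.natDegree ≤ i + n := by
    rw [hQi, hrepr]
    refine le_trans (natDegree_sub_le _ _) (max_le ?_ ?_)
    · exact natDegree_sum_le_of_forall_le _ _ fun j hj =>
        le_trans (natDegree_C_mul_X_pow_le _ _) (by simpa [Nat.lt_succ_iff] using hj)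
    · exact (natDegree_C_mul_X_pow_le lam i).trans (Nat.le_add_right i n)
  have hcoeff : ∀ j ∈ Finset.range (i + n + 1),
      Qi.coeff j = a ((j : ℤ) - (i : ℤ)) - (if j = i then lam else 0) := by
    intro j hj
    rw [hQi, hrepr, coeff_sub, finset_sum_coeff]
    congr 1
    · rw [Finset.sum_eq_single j]
      · simp [coeff_C_mul, coeff_X_pow]
      · intro k _ hk
        simp [coeff_C_mul, coeff_X_pow, Ne.symm hk]
      · intro h; exact absurd hj h
    · simp [coeff_C_mul, coeff_X_pow]
  have hlt2 : ((fun Q : ℂ[X] => X * derivative Q)^[t] Qi).natDegree < i + n + 1 :=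
    lt_of_le_of_lt (xd_natDegree_le t Qi) (by omega)
  have hev := xd_eval_zero t z Qi (hdvd.mul_left _)
  rw [eval_eq_sum_range' hlt2] at hev
  simp only [xd_coeff] at hev
  have hev2 : ∑ j ∈ Finset.range (i + n + 1),
      ((j : ℂ) ^ t * (a ((j : ℤ) - (i : ℤ)) - (if j = i then lam else 0))) * z ^ j = 0 := by
    calc ∑ j ∈ Finset.range (i + n + 1),
          ((j : ℂ) ^ t * (a ((j : ℤ) - (i : ℤ)) - (if j = i then lam else 0))) * z ^ j
        = ∑ x ∈ Finset.range (i + n + 1), (x : ℂ) ^ t * Qi.coeff x * z ^ x :=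
          Finset.sum_congr rfl fun j hj => by rw [hcoeff j hj]
      _ = 0 := hev
  have hsplit : ∑ j ∈ Finset.range (i + n + 1),
        ((j : ℂ) ^ t * (a ((j : ℤ) - (i : ℤ)) - (if j = i then lam else 0))) * z ^ j
      = (∑ j ∈ Finset.range (i + n + 1), a ((j : ℤ) - (i : ℤ)) * ((j : ℂ) ^ t * z ^ j))
        - ∑ j ∈ Finset.range (i + n + 1),
            (if j = i then lam * ((i : ℂ) ^ t * z ^ i) else 0) := by
    rw [← Finset.sum_sub_distrib]
    refine Finset.sum_congr rfl fun j hj => ?_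
    by_cases h : j = i
    · subst h; rw [if_pos rfl, if_pos rfl]; ring
    · simp only [if_neg h]; ring
  rw [hsplit, Finset.sum_ite_eq' (Finset.range (i + n + 1)) i,
    if_pos (Finset.mem_range.mpr (by omega))] at hev2
  exact (sub_eq_zero.mp hev2)

/-- difference-type operator used to prove independence of exponential polynomials -/
def Tdiff (z₀ w : ℂ) (P : ℂ[X]) : ℂ[X] := C w * (P.comp (X + 1)) - C z₀ * P

lemma Tdiff_zero (z₀ w : ℂ) : Tdiff z₀ w 0 = 0 := by simp [Tdiff]

lemma Tdiff_self_iter (z₀ : ℂ) : ∀ (d : ℕ) (P : ℂ[X]), P.natDegree < d → (Tdiff z₀ z₀)^[d] P = 0 := by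
  intro d
  induction d with
  | zero => intro P hP; omega
  | succ d ih =>
    intro P hP
    by_cases h0 : P.natDegree = 0
    · obtain ⟨c, hc⟩ := natDegree_eq_zero.mp h0
      have h1 : Tdiff z₀ z₀ P = 0 := by rw [← hc]; simp [Tdiff]
      rw [Function.iterate_succ_apply, h1, Function.iterate_fixed (Tdiff_zero z₀ z₀) d]
    · have hd1 : 1 ≤ P.natDegree := Nat.one_le_iff_ne_zero.mpr h0
      have hP0 : P ≠ 0 := fun h => h0 (by rw [h]; simp)
      set Q := P.comp (X + 1) with hQ
      have hx1 : (X + 1 : ℂ[X]) = X + C 1 := by rw [map_one]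
      have hQdeg : Q.natDegree = P.natDegree := by
        rw [hQ, natDegree_comp, hx1, natDegree_X_add_C, mul_one]
      have hQlc : Q.leadingCoeff = P.leadingCoeff := by
        rw [hQ, leadingCoeff_comp (by rw [hx1, natDegree_X_add_C]; omega)]
        rw [hx1, (monic_X_add_C (1:ℂ)).leadingCoeff, one_pow, mul_one]
      have hQ0 : Q ≠ 0 := by
        intro h
        rw [h, leadingCoeff_zero] at hQlc
        exact hP0 (leadingCoeff_eq_zero.mp hQlc.symm)
      have hdeglt : (Q - P).degree < Q.degree :=
        degree_sub_lt (by rw [degree_eq_natDegree hQ0, degree_eq_natDegree hP0, hQdeg]) hQ0 hQlc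
      have hTPeq : Tdiff z₀ z₀ P = C z₀ * (Q - P) := by rw [Tdiff, mul_sub]
      have hTP : (Tdiff z₀ z₀ P).natDegree < d := by
        by_cases hQP : Q - P = 0
        · rw [hTPeq, hQP, mul_zero, natDegree_zero]; omega
        · have h2 : (Q - P).natDegree < Q.natDegree := natDegree_lt_natDegree hQP hdeglt
          have h3 := natDegree_C_mul_le z₀ (Q - P)
          rw [hTPeq]
          omega
      rw [Function.iterate_succ_apply]
      exact ih _ hTP

lemma Tdiff_ne (z₀ w : ℂ) (hw : w ≠ z₀) (P : ℂ[X]) (hP : P ≠ 0) : Tdiff z₀ w P ≠ 0 := by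
  have hx1 : (X + 1 : ℂ[X]) = X + C 1 := by rw [map_one]
  have hQdeg : (P.comp (X + 1)).natDegree = P.natDegree := by
    rw [natDegree_comp, hx1, natDegree_X_add_C, mul_one]
  have hQlc : (P.comp (X + 1)).leadingCoeff = P.leadingCoeff := by
    rw [leadingCoeff_comp (by rw [hx1, natDegree_X_add_C]; omega), hx1,
      (monic_X_add_C (1:ℂ)).leadingCoeff, one_pow, mul_one]
  intro h
  have hco : (Tdiff z₀ w P).coeff P.natDegree = 0 := by rw [h, coeff_zero]
  rw [Tdiff, coeff_sub, coeff_C_mul, coeff_C_mul, ← hQdeg, coeff_natDegree, hQdeg,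
    coeff_natDegree, hQlc] at hco
  have : (w - z₀) * P.leadingCoeff = 0 := by ring_nf; ring_nf at hco; linear_combination hco
  rcases mul_eq_zero.mp this with h1 | h1
  · exact hw (by linear_combination h1)
  · exact hP (leadingCoeff_eq_zero.mp h1)

lemma Tdiff_iter_ne (z₀ w : ℂ) (hw : w ≠ z₀) (d : ℕ) (P : ℂ[X]) (hP : P ≠ 0) :
    (Tdiff z₀ w)^[d] P ≠ 0 := by
  induction d with
  | zero => simpa using hP
  | succ d ih => rw [Function.iterate_succ_apply']; exact Tdiff_ne z₀ w hw _ ih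

lemma expIndep : ∀ (s : Finset ℂ), (∀ z ∈ s, z ≠ 0) → ∀ (P : ℂ → ℂ[X]),
    (∀ j : ℕ, ∑ z ∈ s, (P z).eval (j : ℂ) * z ^ j = 0) → ∀ z ∈ s, P z = 0 := by
  intro s
  induction s using Finset.induction_on with
  | empty => simp
  | @insert z₀ s hz₀ ih =>
    intro hnz P hsum
    have step : ∀ (Q : ℂ → ℂ[X]),
        (∀ j : ℕ, ∑ z ∈ insert z₀ s, (Q z).eval (j : ℂ) * z ^ j = 0) →
        ∀ j : ℕ, ∑ z ∈ insert z₀ s, (Tdiff z₀ z (Q z)).eval (j : ℂ) * z ^ j = 0 := by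
      intro Q hQ j
      have e : ∀ z ∈ insert z₀ s, (Tdiff z₀ z (Q z)).eval (j : ℂ) * z ^ j
          = ((Q z).eval ((j + 1 : ℕ) : ℂ) * z ^ (j + 1)) - z₀ * ((Q z).eval (j : ℂ) * z ^ j) := by
        intro z _
        rw [Tdiff, eval_sub, eval_mul, eval_mul, eval_C, eval_C, eval_comp, eval_add, eval_X,
          eval_one]
        push_cast
        ring
      rw [Finset.sum_congr rfl e, Finset.sum_sub_distrib, hQ (j + 1), ← Finset.mul_sum, hQ j]
      simp
    have iter : ∀ (c : ℕ) (j : ℕ),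
        ∑ z ∈ insert z₀ s, ((Tdiff z₀ z)^[c] (P z)).eval (j : ℂ) * z ^ j = 0 := by
      intro c
      induction c with
      | zero => simpa using hsum
      | succ c ihc =>
        intro j
        have h := step (fun z => (Tdiff z₀ z)^[c] (P z)) ihc j
        simpa [Function.iterate_succ_apply'] using h
    set d := (P z₀).natDegree + 1 with hd
    have hz₀kill : (Tdiff z₀ z₀)^[d] (P z₀) = 0 := Tdiff_self_iter z₀ d (P z₀) (by omega)
    have hs0 : ∀ j : ℕ, ∑ z ∈ s, ((Tdiff z₀ z)^[d] (P z)).eval (j : ℂ) * z ^ j = 0 := by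
      intro j
      have h := iter d j
      rw [Finset.sum_insert hz₀, hz₀kill] at h
      simpa using h
    have hPs : ∀ z ∈ s, P z = 0 := by
      have h2 := ih (fun z hz => hnz z (Finset.mem_insert_of_mem hz))
        (fun z => (Tdiff z₀ z)^[d] (P z)) hs0
      intro z hz
      by_contra hP0
      exact Tdiff_iter_ne z₀ z (fun h => hz₀ (h ▸ hz)) d (P z) hP0 (h2 z hz)
    have hz₀sum : ∀ j : ℕ, (P z₀).eval (j : ℂ) * z₀ ^ j = 0 := by
      intro j
      have h := hsum j
      rw [Finset.sum_insert hz₀,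
        Finset.sum_eq_zero (fun z hz => by rw [hPs z hz]; simp)] at h
      simpa using h
    have hz₀0 : P z₀ = 0 := by
      refine eq_zero_of_infinite_isRoot _ ?_
      apply Set.infinite_of_injective_forall_mem (f := fun j : ℕ => (j : ℂ))
      · exact Nat.cast_injective
      · intro j
        have h := hz₀sum j
        have hz0 : z₀ ≠ 0 := hnz z₀ (Finset.mem_insert_self _ _)
        rcases mul_eq_zero.mp h with h1 | h1
        · exact h1
        · exact absurd h1 (pow_ne_zero _ hz0)
    intro z hz
    rcases Finset.mem_insert.mp hz with rfl | hz
    · exact hz₀0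
    · exact hPs z hz

lemma mem_ell2 (z : ℂ) (hz : ‖z‖ < 1) (t : ℕ) :
    Memℓp (fun j : ℕ => (j : ℂ) ^ t * z ^ j) 2 := by
  apply memℓp_gen
  have h2 : (2 : ℝ≥0∞).toReal = 2 := by norm_num
  rw [h2]
  have heq : ∀ j : ℕ, ‖(j : ℂ) ^ t * z ^ j‖ ^ (2 : ℝ)
      = (j : ℝ) ^ (2 * t) * (‖z‖ ^ 2) ^ j := by
    intro j
    rw [Real.rpow_two]
    rw [norm_mul, norm_pow, norm_pow, Complex.norm_natCast]
    rw [mul_pow, ← pow_mul, ← pow_mul, ← pow_mul]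
    ring_nf
  rw [funext heq]
  apply summable_pow_mul_geometric_of_norm_lt_one
  rw [Real.norm_eq_abs, abs_of_nonneg (by positivity)]
  nlinarith [norm_nonneg z]

/-- coordinate functional on `ℓ²` as a continuous linear map -/
def coordL (i : ℕ) : ell2 →L[ℂ] ℂ :=
  LinearMap.mkContinuous
    { toFun := fun f => f i
      map_add' := fun f g => by
        have := lp.coeFn_add f g
        exact congrFun this i
      map_smul' := fun r f => by
        have := lp.coeFn_smul r f
        simpa using congrFun this i }
    1 (fun f => by rw [one_mul]; exact lp.norm_apply_le_norm (by norm_num) f i)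

lemma coordL_apply (i : ℕ) (f : ell2) : coordL i f = f i := rfl

lemma E_vanish (E : ell2 →L[ℂ] ell2) (i : ℕ)
    (h : ∀ j : ℕ, (E (lp.single 2 j 1)) i = 0) (w : ell2) : (E w) i = 0 := by
  have hs : HasSum (fun j : ℕ => lp.single 2 j (w j)) w :=
    lp.hasSum_single (by norm_num) w
  have hs2 : HasSum (fun j : ℕ => coordL i (E (lp.single 2 j (w j)))) (coordL i (E w)) := by
    exact (hs.mapL E).mapL (coordL i)
  have hzero : ∀ j : ℕ, coordL i (E (lp.single 2 j (w j))) = 0 := by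
    intro j
    have h1 : lp.single 2 j (w j) = w j • (lp.single 2 j (1 : ℂ) : ell2) := by
      rw [← lp.single_smul, smul_eq_mul, mul_one]
    rw [h1, map_smul, coordL_apply]
    have h2 : ((w j • E (lp.single 2 j (1:ℂ))) : ell2) i
        = w j • ((E (lp.single 2 j (1:ℂ))) i) := by
      rw [lp.coeFn_smul]; rfl
    rw [h2, h j, smul_zero]
  rw [← coordL_apply]
  exact hs2.unique (by simpa [hzero] using hasSum_zero)

end Helpers

/-- with `q = max m k₁`, if `λ ∉ a(𝕋)` and `p(λ) > q`, then `λ` is an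
eigenvalue of `A = T(a) + E`. -/
theorem stmt_8 (m n : ℕ) (hm : 1 ≤ m) (hn : 1 ≤ n) (a : ℤ → ℂ)
    (ham : a (-(m : ℤ)) ≠ 0) (han : a (n : ℤ) ≠ 0)
    (hsupp : ∀ k : ℤ, (k < -(m : ℤ) ∨ (n : ℤ) < k) → a k = 0)
    (k₁ k₂ : ℕ) (hk₁ : 1 ≤ k₁) (hk₂ : 1 ≤ k₂)
    (T E A : ell2 →L[ℂ] ell2)
    (hT : ∀ (v : ell2) (i : ℕ),
      (T v) i = ∑ j ∈ Finset.range (i + n + 1), a ((j : ℤ) - (i : ℤ)) * v j)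
    (hE : ∀ i j : ℕ, (k₁ ≤ i ∨ k₂ ≤ j) → (E (lp.single 2 j 1)) i = 0)
    (hA : A = T + E)
    (lam : ℂ) (hlam : lam ∉ aCircle m n a)
    (hp : max m k₁ < rootCount m n a lam) :
    ∃ v : ell2, v ≠ 0 ∧ A v = lam • v := by
  classical
  set q := max m k₁ with hq
  set b := bpoly m n a lam with hb
  have hbcoeff : b.coeff (m + n) = a (n : ℤ) := by
    have hcast : ((m + n : ℕ) : ℤ) - (m : ℤ) = (n : ℤ) := by push_cast; ring
    rw [hb, bpoly, Polynomial.coeff_sub, Polynomial.finset_sum_coeff]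
    rw [Finset.sum_eq_single (m + n)]
    · rw [Polynomial.coeff_C_mul, Polynomial.coeff_X_pow, if_pos rfl, mul_one, hcast,
        Polynomial.coeff_C_mul, Polynomial.coeff_X_pow, if_neg (by omega), mul_zero, sub_zero]
    · intro k _ hk
      rw [Polynomial.coeff_C_mul, Polynomial.coeff_X_pow, if_neg (Ne.symm hk), mul_zero]
    · intro habs
      exact absurd (Finset.mem_range.mpr (by omega)) habs
  have hb0 : b ≠ 0 := fun h => han (by rw [← hbcoeff, h, Polynomial.coeff_zero])
  set R := b.roots.filter (fun z => ‖z‖ < 1) with hR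
  have hcard : Multiset.card R = rootCount m n a lam := by rw [rootCount, hR, hb]
  have heval0 : b.eval 0 = a (-(m : ℤ)) := by
    rw [hb, bpoly, Polynomial.eval_sub, Polynomial.eval_mul, Polynomial.eval_pow,
      Polynomial.eval_X, Polynomial.eval_C, zero_pow (by omega : m ≠ 0), mul_zero, sub_zero,
      Polynomial.eval_finset_sum]
    rw [Finset.sum_eq_single 0]
    · simp
    · intro k _ hk
      simp [zero_pow hk]
    · intro habs
      exact absurd (Finset.mem_range.mpr (by omega)) habs
  have hzne : ∀ z ∈ R, z ≠ 0 := by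
    intro z hz h0
    have hroot := Polynomial.isRoot_of_mem_roots (Multiset.mem_filter.mp hz).1
    subst h0
    apply ham
    rw [← heval0]
    exact hroot
  set s := R.toFinset with hs
  set I := s.sigma (fun z => Finset.range (R.count z)) with hI
  have hcardI : I.card = Multiset.card R := by
    rw [hI, Finset.card_sigma]
    simp only [Finset.card_range]
    exact Multiset.toFinset_sum_count_eq R
  have hmemI : ∀ x : (Σ _ : ℂ, ℕ), x ∈ I →
      x.1 ∈ b.roots ∧ ‖x.1‖ < 1 ∧ x.2 < R.count x.1 := by
    intro x hx
    rw [hI, Finset.mem_sigma] at hx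
    obtain ⟨h1, h2⟩ := hx
    rw [Finset.mem_range] at h2
    have h3 := Multiset.mem_toFinset.mp h1
    exact ⟨(Multiset.mem_filter.mp h3).1, (Multiset.mem_filter.mp h3).2, h2⟩
  have hdvd : ∀ x : (Σ _ : ℂ, ℕ), x ∈ I →
      (Polynomial.X - Polynomial.C x.1) ^ (x.2 + 1) ∣ b := by
    intro x hx
    obtain ⟨h1, h2, h3⟩ := hmemI x hx
    refine (Polynomial.le_rootMultiplicity_iff hb0).mp ?_
    have h4 : R.count x.1 ≤ b.roots.count x.1 :=
      Multiset.count_le_of_le x.1 (Multiset.filter_le _ _)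
    rw [Polynomial.count_roots] at h4
    omega
  have hmem2 : ∀ x : (Σ _ : ℂ, ℕ), x ∈ I →
      Memℓp (fun j : ℕ => (j : ℂ) ^ x.2 * x.1 ^ j) 2 :=
    fun x hx => mem_ell2 x.1 (hmemI x hx).2.1 x.2
  let vb : {x // x ∈ I} → ell2 := fun x => ⟨fun j => (j : ℂ) ^ x.1.2 * x.1.1 ^ j, hmem2 x.1 x.2⟩
  let vc : ({x // x ∈ I} → ℂ) → ell2 := fun c => ∑ x ∈ I.attach, c x • vb x
  have vc_coord : ∀ c (j : ℕ), (vc c) j = ∑ x ∈ I.attach, c x * ((j : ℂ) ^ x.1.2 * x.1.1 ^ j) := by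
    intro c j
    show (↑(∑ x ∈ I.attach, c x • vb x) : ∀ _ : ℕ, ℂ) j = _
    rw [lp.coeFn_sum, Finset.sum_apply]
    rfl
  have vc_add : ∀ c d, vc (c + d) = vc c + vc d := by
    intro c d
    show (∑ x ∈ I.attach, (c x + d x) • vb x) = _
    rw [← Finset.sum_add_distrib]
    exact Finset.sum_congr rfl fun x _ => add_smul _ _ _
  have vc_smul : ∀ (r : ℂ) c, vc (r • c) = r • vc c := by
    intro r c
    show (∑ x ∈ I.attach, (r * c x) • vb x) = _
    rw [Finset.smul_sum]
    exact Finset.sum_congr rfl fun x _ => mul_smul _ _ _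
  let Ψ : ({x // x ∈ I} → ℂ) →ₗ[ℂ] (Fin q → ℂ) :=
    { toFun := fun c i => A (vc c) (i : ℕ) - lam * (vc c) (i : ℕ)
      map_add' := by
        intro c d
        funext i
        dsimp only
        rw [vc_add, map_add]
        rw [congrFun (lp.coeFn_add (A (vc c)) (A (vc d))) (i : ℕ),
          congrFun (lp.coeFn_add (vc c) (vc d)) (i : ℕ)]
        simp only [Pi.add_apply]
        ring
      map_smul' := by
        intro r c
        funext i
        dsimp only
        rw [vc_smul, map_smul]
        rw [congrFun (lp.coeFn_smul r (A (vc c))) (i : ℕ),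
          congrFun (lp.coeFn_smul r (vc c)) (i : ℕ)]
        simp only [Pi.smul_apply, smul_eq_mul, RingHom.id_apply]
        ring }
  have hnotinj : ¬ Function.Injective Ψ := by
    intro hinj
    have hle := LinearMap.finrank_le_finrank_of_injective hinj
    rw [Module.finrank_pi ℂ, Module.finrank_pi ℂ, Fintype.card_coe, Fintype.card_fin,
      hcardI, hcard] at hle
    omega
  obtain ⟨c1, c2, hΨeq, hne⟩ := Function.not_injective_iff.mp hnotinj
  set c := c1 - c2 with hc
  have hc0 : c ≠ 0 := sub_ne_zero.mpr hne
  have hΨc : Ψ c = 0 := by rw [hc, map_sub, hΨeq, sub_self]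
  refine ⟨vc c, ?_, ?_⟩
  · intro hv0
    apply hc0
    have hcoords : ∀ j : ℕ, ∑ x ∈ I.attach, c x * ((j : ℂ) ^ x.1.2 * x.1.1 ^ j) = 0 := by
      intro j
      rw [← vc_coord, hv0]
      rfl
    set ct : (Σ _ : ℂ, ℕ) → ℂ := fun x => if h : x ∈ I then c ⟨x, h⟩ else 0 with hct
    set P : ℂ → Polynomial ℂ :=
      fun z => ∑ t ∈ Finset.range (R.count z), Polynomial.C (ct ⟨z, t⟩) * Polynomial.X ^ t
      with hP
    have hsum : ∀ j : ℕ, ∑ z ∈ s, (P z).eval (j : ℂ) * z ^ j = 0 := by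
      intro j
      calc ∑ z ∈ s, (P z).eval (j : ℂ) * z ^ j
          = ∑ z ∈ s, ∑ t ∈ Finset.range (R.count z), ct ⟨z, t⟩ * ((j : ℂ) ^ t * z ^ j) := by
            refine Finset.sum_congr rfl fun z _ => ?_
            rw [hP, Polynomial.eval_finset_sum, Finset.sum_mul]
            refine Finset.sum_congr rfl fun t _ => ?_
            rw [Polynomial.eval_mul, Polynomial.eval_C, Polynomial.eval_pow, Polynomial.eval_X]
            ring
        _ = ∑ x ∈ I, ct x * ((j : ℂ) ^ x.2 * x.1 ^ j) := by
            rw [hI, Finset.sum_sigma]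
        _ = ∑ x ∈ I.attach, c x * ((j : ℂ) ^ x.1.2 * x.1.1 ^ j) := by
            rw [← Finset.sum_attach I (fun x => ct x * ((j : ℂ) ^ x.2 * x.1 ^ j))]
            refine Finset.sum_congr rfl fun x _ => ?_
            rw [hct]
            simp only [Sigma.eta, dif_pos x.2]
        _ = 0 := hcoords j
    have hPzero := expIndep s (fun z hz => hzne z (Multiset.mem_toFinset.mp hz)) P hsum
    funext x
    have hx1s : x.1.1 ∈ s := (Finset.mem_sigma.mp x.2).1
    have hx2r : x.1.2 ∈ Finset.range (R.count x.1.1) := (Finset.mem_sigma.mp x.2).2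
    have hcoeff : (P x.1.1).coeff x.1.2 = ct ⟨x.1.1, x.1.2⟩ := by
      rw [hP, Polynomial.finset_sum_coeff, Finset.sum_eq_single x.1.2]
      · rw [Polynomial.coeff_C_mul, Polynomial.coeff_X_pow, if_pos rfl, mul_one]
      · intro t _ ht
        rw [Polynomial.coeff_C_mul, Polynomial.coeff_X_pow, if_neg (Ne.symm ht), mul_zero]
      · intro habs
        exact absurd hx2r habs
    rw [hPzero x.1.1 hx1s, Polynomial.coeff_zero] at hcoeff
    have : ct ⟨x.1.1, x.1.2⟩ = c x := by
      rw [hct]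
      simp only [Sigma.eta, dif_pos x.2]
    rw [this] at hcoeff
    exact hcoeff.symm
  · have heq : ∀ i : ℕ, A (vc c) i = lam * (vc c) i := by
      intro i
      by_cases hi : i < q
      · have h := congrFun hΨc (⟨i, hi⟩ : Fin q)
        simp only [Pi.zero_apply] at h
        exact sub_eq_zero.mp h
      · push_neg at hi
        have him : m ≤ i := le_trans (le_max_left _ _) hi
        have hik : k₁ ≤ i := le_trans (le_max_right _ _) hi
        have hEv : (E (vc c)) i = 0 := E_vanish E i (fun j => hE i j (Or.inl hik)) (vc c)
        have hTv : (T (vc c)) i = lam * (vc c) i := by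
          rw [hT (vc c) i]
          calc ∑ j ∈ Finset.range (i + n + 1), a ((j : ℤ) - (i : ℤ)) * (vc c) j
              = ∑ j ∈ Finset.range (i + n + 1), ∑ x ∈ I.attach,
                  a ((j : ℤ) - (i : ℤ)) * (c x * ((j : ℂ) ^ x.1.2 * x.1.1 ^ j)) := by
                refine Finset.sum_congr rfl fun j _ => ?_
                rw [vc_coord, Finset.mul_sum]
            _ = ∑ x ∈ I.attach, ∑ j ∈ Finset.range (i + n + 1),
                  a ((j : ℤ) - (i : ℤ)) * (c x * ((j : ℂ) ^ x.1.2 * x.1.1 ^ j)) :=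
                Finset.sum_comm
            _ = ∑ x ∈ I.attach, c x * (lam * ((i : ℂ) ^ x.1.2 * x.1.1 ^ i)) := by
                refine Finset.sum_congr rfl fun x _ => ?_
                rw [show ∑ j ∈ Finset.range (i + n + 1),
                    a ((j : ℤ) - (i : ℤ)) * (c x * ((j : ℂ) ^ x.1.2 * x.1.1 ^ j))
                  = c x * ∑ j ∈ Finset.range (i + n + 1),
                    a ((j : ℤ) - (i : ℤ)) * ((j : ℂ) ^ x.1.2 * x.1.1 ^ j) from by
                  rw [Finset.mul_sum]
                  exact Finset.sum_congr rfl fun j _ => by ring]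
                rw [claim1 m n a hsupp lam x.1.1 x.1.2 i (hdvd x.1 x.2) him]
            _ = lam * (vc c) i := by
                rw [vc_coord, Finset.mul_sum]
                exact Finset.sum_congr rfl fun x _ => by ring
        have hAv : A (vc c) i = T (vc c) i + E (vc c) i := by
          rw [hA, ContinuousLinearMap.add_apply]
          exact congrFun (lp.coeFn_add (T (vc c)) (E (vc c))) i
        rw [hAv, hEv, hTv, add_zero]
    apply lp.ext
    funext i
    rw [congrFun (lp.coeFn_smul lam (vc c)) i]
    simp only [Pi.smul_apply, smul_eq_mul]
    exact heq i
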